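/- With notation as above, the multiplicity of the closed interval [t_i,t_j] in B equals n[t_i,t_j} - n[t_i,t_{j+1}} - N[t_i,t_{j+1}), where n[t_i,s} is the number of intervals in B containing s with closed left endpoint t_i and N[t_i,t_{j+1}) is the multiplicity of [t_i,t_{j+1}). -/
import Mathlib


open Classical Multiset

noncomputable section

/-- The four kinds of intervals: closed-closed, closed-open, open-closed, open-open. -/
inductive BarKind : Type
  | cc | co | oc | oo
  deriving DecidableEq

/-- A real interval of one of the four types, with endpoints `a ≤ b`. -/
structure Bar : Type where
  kind : BarKind
  a : ℝ
  b : ℝ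

instance : DecidableEq Bar := Classical.decEq _

namespace Bar

/-- The underlying set of points of the interval. -/
def toSet (I : Bar) : Set ℝ :=
  match I.kind with
  | .cc => Set.Icc I.a I.b
  | .co => Set.Ico I.a I.b
  | .oc => Set.Ioc I.a I.b
  | .oo => Set.Ioo I.a I.b

/-- Nonemptiness condition: `a ≤ b` for closed intervals, `a < b` otherwise. -/
def Valid (I : Bar) : Prop :=
  match I.kind with
  | .cc => I.a ≤ I.b
  | _ => I.a < I.b

def rightOpen (I : Bar) : Prop := I.kind = .co ∨ I.kind = .oo
def leftOpen (I : Bar) : Prop := I.kind = .oc ∨ I.kind = .oo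
def leftClosed (I : Bar) : Prop := I.kind = .cc ∨ I.kind = .co

end Bar

/-- `i(t,t')`: the number of intervals of `B` containing `[t,t']`. -/
def icount (B : Multiset Bar) (t t' : ℝ) : ℕ :=
  countP (fun I => Set.Icc t t' ⊆ I.toSet) B

/-- `l(t)`: the number of intervals of `B` containing `t`. -/
def lcount (B : Multiset Bar) (t : ℝ) : ℕ :=
  countP (fun I => t ∈ I.toSet) B

/-- `l⁺(t;t')`: intervals of `B` containing `t` with open right endpoint `≤ t'`. -/
def lplus (B : Multiset Bar) (t t' : ℝ) : ℕ :=
  countP (fun I => t ∈ I.toSet ∧ I.rightOpen ∧ I.b ≤ t') B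

/-- `l⁻(t;t'')`: intervals of `B` containing `t` with open left endpoint `≥ t''`. -/
def lminus (B : Multiset Bar) (t t'' : ℝ) : ℕ :=
  countP (fun I => t ∈ I.toSet ∧ I.leftOpen ∧ t'' ≤ I.a) B

/-- `e(t;t',t'')`: open intervals `(a,b)` of `B` with `t'' ≤ a < t < b ≤ t'`. -/
def ecount (B : Multiset Bar) (t t' t'' : ℝ) : ℕ :=
  countP (fun I => I.kind = .oo ∧ t'' ≤ I.a ∧ I.a < t ∧ t < I.b ∧ I.b ≤ t') B

/-- All endpoints of intervals of `B` lie among the critical values `t 0, …, t N`. -/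
def endpointsIn (B : Multiset Bar) (t : ℕ → ℝ) (N : ℕ) : Prop :=
  ∀ I ∈ B, (∃ i ≤ N, I.a = t i) ∧ (∃ j ≤ N, I.b = t j)

section Aux

lemma countP_or_disj {α : Type*} (p q : α → Prop) [DecidablePred p] [DecidablePred q]
    (s : Multiset α) (h : ∀ a ∈ s, ¬(p a ∧ q a)) :
    countP (fun a => p a ∨ q a) s = countP p s + countP q s := by
  induction s using Multiset.induction_on with
  | empty => simp
  | cons a s ih =>
    have ha := h a (Multiset.mem_cons_self a s)
    have ihs := ih (fun b hb => h b (Multiset.mem_cons_of_mem hb))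
    by_cases hp : p a
    · by_cases hq : q a
      · exact absurd ⟨hp, hq⟩ ha
      · simp [Multiset.countP_cons, hp, hq, ihs]; omega
    · by_cases hq : q a <;> simp [Multiset.countP_cons, hp, hq, ihs] <;> omega

end Aux

theorem stmt12 (N : ℕ) (t : ℕ → ℝ) (ht : StrictMono t)
    (B : Multiset Bar) (hB : endpointsIn B t N)
    (i j : ℕ) (hij : i ≤ j) (hjN : j + 1 ≤ N) :
    (count (⟨.cc, t i, t j⟩ : Bar) B : ℤ) =
      (countP (fun I => t j ∈ I.toSet ∧ I.leftClosed ∧ I.a = t i) B : ℤ)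
        - countP (fun I => t (j + 1) ∈ I.toSet ∧ I.leftClosed ∧ I.a = t i) B
        - count (⟨.co, t i, t (j + 1)⟩ : Bar) B := by
  set A : Bar := ⟨.cc, t i, t j⟩ with hA
  set C : Bar := ⟨.co, t i, t (j + 1)⟩ with hC
  have h1 : t i ≤ t j := ht.monotone hij
  have h2 : t j < t (j + 1) := ht (Nat.lt_succ_self j)
  have h3 : t i ≤ t (j + 1) := h1.trans h2.le
  have key : ∀ I ∈ B,
      (t j ∈ I.toSet ∧ I.leftClosed ∧ I.a = t i) =
      ((t (j + 1) ∈ I.toSet ∧ I.leftClosed ∧ I.a = t i) ∨ (I = A ∨ I = C)) := by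
    intro I hI
    obtain ⟨_, k, hkN, hbk⟩ := hB I hI
    obtain ⟨kind, a, b⟩ := I
    simp only [eq_iff_iff]
    constructor
    · rintro ⟨hmem, hLC, ha⟩
      by_cases hq : t (j + 1) ∈ Bar.toSet ⟨kind, a, b⟩
      · exact Or.inl ⟨hq, hLC, ha⟩
      right
      simp only at ha hbk
      rcases hLC with h | h <;> simp only at h <;> subst h <;>
        simp only [Bar.toSet, Set.mem_Icc, Set.mem_Ico] at hmem hq
      · left
        push_neg at hq
        have hblt : b < t (j + 1) := by
          rcases lt_or_ge b (t (j+1)) with h' | h'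
          · exact h'
          · exact absurd (hq (ha ▸ h3)) (not_lt.mpr h')
        have hk1 : k < j + 1 := ht.lt_iff_lt.mp (hbk ▸ hblt)
        have hk2 : j ≤ k := ht.le_iff_le.mp (hbk ▸ hmem.2)
        have : k = j := by omega
        rw [hA, ha, hbk, this]
      · right
        push_neg at hq
        have hble : b ≤ t (j + 1) := hq (ha ▸ h3)
        have hk1 : j < k := ht.lt_iff_lt.mp (hbk ▸ hmem.2)
        have hk2 : k ≤ j + 1 := ht.le_iff_le.mp (hbk ▸ hble)
        have : k = j + 1 := by omega
        rw [hC, ha, hbk, this]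
    · rintro (⟨hq, hLC, ha⟩ | hAC)
      · refine ⟨?_, hLC, ha⟩
        have ha' : a = t i := ha
        rcases hLC with h | h <;> simp only at h <;> subst h <;>
          simp only [Bar.toSet, Set.mem_Icc, Set.mem_Ico] at hq ⊢
        · exact ⟨ha' ▸ h1, h2.le.trans hq.2⟩
        · exact ⟨ha' ▸ h1, h2.trans hq.2⟩
      · rcases hAC with h | h
        · rw [hA] at h
          injection h with hk ha' hb'
          subst hk; subst ha'; subst hb'
          exact ⟨⟨h1, le_refl _⟩, Or.inl rfl, rfl⟩
        · rw [hC] at h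
          injection h with hk ha' hb'
          subst hk; subst ha'; subst hb'
          exact ⟨⟨h1, h2⟩, Or.inr rfl, rfl⟩
  have e1 : countP (fun I => t j ∈ I.toSet ∧ I.leftClosed ∧ I.a = t i) B =
      countP (fun I => (t (j + 1) ∈ I.toSet ∧ I.leftClosed ∧ I.a = t i) ∨ (I = A ∨ I = C)) B :=
    countP_congr rfl key
  have hqA : ¬ (t (j + 1) ∈ A.toSet ∧ A.leftClosed ∧ A.a = t i) := by
    simp [hA, Bar.toSet, Set.mem_Icc, not_and, h2.not_ge]
  have hqC : ¬ (t (j + 1) ∈ C.toSet ∧ C.leftClosed ∧ C.a = t i) := by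
    simp [hC, Bar.toSet, Set.mem_Ico]
  have hACne : A ≠ C := by simp [hA, hC, Bar.mk.injEq]
  have e2 : countP (fun I => (t (j + 1) ∈ I.toSet ∧ I.leftClosed ∧ I.a = t i) ∨ (I = A ∨ I = C)) B
      = countP (fun I => t (j + 1) ∈ I.toSet ∧ I.leftClosed ∧ I.a = t i) B
        + countP (fun I => I = A ∨ I = C) B := by
    apply countP_or_disj
    rintro I hI ⟨hq, (rfl | rfl)⟩
    · exact hqA hq
    · exact hqC hq
  have e3 : countP (fun I => I = A ∨ I = C) B = countP (fun I => I = A) B + countP (fun I => I = C) B := by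
    apply countP_or_disj
    rintro I hI ⟨rfl, h⟩
    exact hACne h
  have e4 : countP (fun I => I = A) B = count A B :=
    countP_congr rfl (fun x _ => by simp [eq_comm, Multiset.count])
  have e5 : countP (fun I => I = C) B = count C B :=
    countP_congr rfl (fun x _ => by simp [eq_comm, Multiset.count])
  have : countP (fun I => t j ∈ I.toSet ∧ I.leftClosed ∧ I.a = t i) B =
      countP (fun I => t (j + 1) ∈ I.toSet ∧ I.leftClosed ∧ I.a = t i) B + count A B + count C B := by
    rw [e1, e2, e3, e4, e5]; ring
  push_cast [this]
  ring
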